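/- For all integers n ≥ 1 and a ≥ 1: ∑_{w ∈ S_n, sgn(w)=1} C(n + a - des(w) - 1, n) = (a^n + a^{⌈n/2⌉})/2. -/

import Mathlib

open scoped Classical

/-- Number of descents of a permutation of `{0,…,n-1}`. -/
noncomputable def desA {n : ℕ} (w : Equiv.Perm (Fin n)) : ℕ :=
  ((Finset.range (n - 1)).filter (fun i =>
    ∃ h : i + 1 < n, w ⟨i + 1, h⟩ < w ⟨i, Nat.lt_of_succ_lt h⟩)).card

/-- Number of inversions of a permutation. -/
noncomputable def invA {n : ℕ} (w : Equiv.Perm (Fin n)) : ℕ :=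
  (Finset.univ.filter (fun p : Fin n × Fin n => p.1 < p.2 ∧ w p.2 < w p.1)).card



lemma signAux_eq_sign {n : ℕ} (w : Equiv.Perm (Fin n)) :
    Equiv.Perm.signAux w = Equiv.Perm.sign w := by
  refine Equiv.Perm.swap_induction_on w ?_ ?_
  · simp [Equiv.Perm.signAux_one]
  · intro f x y hxy ih
    rw [Equiv.Perm.signAux_mul, Equiv.Perm.sign_mul, ih,
      Equiv.Perm.signAux_swap hxy, Equiv.Perm.sign_swap hxy]


lemma sign_eq_pow_invA {n : ℕ} (w : Equiv.Perm (Fin n)) :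
    ((Equiv.Perm.sign w : ℤ) : ℚ) = (-1 : ℚ) ^ (invA w) := by
  rw [← signAux_eq_sign]
  have : ((Equiv.Perm.signAux w : ℤ) : ℚ)
      = ∏ x ∈ Equiv.Perm.finPairsLT n, (if w x.1 ≤ w x.2 then (-1 : ℚ) else 1) := by
    unfold Equiv.Perm.signAux
    rw [← Units.coeHom_apply, map_prod, Int.cast_prod]
    refine Finset.prod_congr rfl fun x _ => ?_
    split <;> simp
  rw [this, Finset.prod_ite, Finset.prod_const, Finset.prod_const, one_pow, mul_one]
  congr 1
  unfold invA
  refine Finset.card_bij (fun x _ => (x.2, x.1)) ?_ ?_ ?_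
  · rintro ⟨x1, x2⟩ hx
    simp only [Finset.mem_filter, Equiv.Perm.mem_finPairsLT] at hx
    obtain ⟨hlt, hle⟩ := hx
    refine Finset.mem_filter.2 ⟨Finset.mem_univ _, hlt, ?_⟩
    rcases lt_or_eq_of_le hle with h | h
    · exact h
    · exact absurd (w.injective h) (by exact fun he => absurd he (ne_of_gt hlt))
  · rintro ⟨x1, x2⟩ hx ⟨y1, y2⟩ hy h
    simp only [Prod.mk.injEq] at h
    exact Sigma.ext h.2 (heq_of_eq h.1)
  · rintro ⟨b1, b2⟩ hb
    simp only [Finset.mem_filter, Finset.mem_univ, true_and] at hb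
    refine ⟨⟨b2, b1⟩, ?_, rfl⟩
    simp only [Finset.mem_filter, Equiv.Perm.mem_finPairsLT]
    exact ⟨hb.1, le_of_lt hb.2⟩

noncomputable def epsP {m a : ℕ} (f : Fin m → Fin a) : ℚ :=
  ∏ p : Fin m × Fin m, if p.1 < p.2 ∧ f p.2 < f p.1 then (-1 : ℚ) else 1

lemma epsP_cons2 {m a : ℕ} (x y : Fin a) (g : Fin m → Fin a) :
    epsP (Fin.cons x (Fin.cons y g)) =
      (if y < x then (-1 : ℚ) else 1) *
        ((∏ j, if g j < x then (-1 : ℚ) else 1) *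
          ((∏ j, if g j < y then (-1 : ℚ) else 1) * epsP g)) := by
  unfold epsP
  rw [Fintype.prod_prod_type, Fintype.prod_prod_type]
  simp only [Fin.prod_univ_succ, Fin.cons_zero, Fin.cons_succ, Fin.succ_pos,
    Fin.succ_lt_succ_iff, lt_self_iff_false, Fin.not_lt_zero, false_and, if_false,
    true_and, if_true, one_mul, mul_one]
  ring

lemma key_double_sum {a : ℕ} (s : Fin a → ℚ) (hs : ∀ z, s z * s z = 1) :
    ∑ x : Fin a, ∑ y : Fin a, (if y < x then (-1 : ℚ) else 1) * (s x * s y) = a := by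
  set S := ∑ x : Fin a, ∑ y : Fin a, (if y < x then (-1 : ℚ) else 1) * (s x * s y) with hS
  have hcomm : S = ∑ x : Fin a, ∑ y : Fin a, (if x < y then (-1 : ℚ) else 1) * (s y * s x) := by
    rw [hS, Finset.sum_comm]
  have h2 : S + S = 2 * a := by
    nth_rewrite 2 [hcomm]
    rw [← Finset.sum_add_distrib]
    simp_rw [← Finset.sum_add_distrib]
    have : ∀ x y : Fin a,
        (if y < x then (-1 : ℚ) else 1) * (s x * s y)
          + (if x < y then (-1 : ℚ) else 1) * (s y * s x) = if y = x then 2 else 0 := by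
      intro x y
      by_cases hxy : y = x
      · subst hxy
        simp only [lt_irrefl, if_neg, if_pos rfl, ite_false, ite_true]
        nlinarith [hs y]
      · rw [if_neg hxy]
        rcases Ne.lt_or_gt hxy with h | h
        · rw [if_pos h, if_neg (asymm h)]; ring
        · rw [if_neg (asymm h), if_pos h]; ring
    simp_rw [this]
    simp [Finset.sum_ite_eq, mul_comm]
  linarith

lemma sum_epsP (a : ℕ) : ∀ m, ∑ f : Fin m → Fin a, epsP f = (a : ℚ) ^ ((m + 1) / 2) := by
  intro m
  induction m using Nat.twoStepInduction with
  | zero => simp [epsP]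
  | one =>
    have : ∀ f : Fin 1 → Fin a, epsP f = 1 := by
      intro f
      unfold epsP
      apply Finset.prod_eq_one
      rintro ⟨p1, p2⟩ _
      have : p1 = p2 := Subsingleton.elim _ _
      simp [this]
    simp only [this, Finset.sum_const, Finset.card_univ, Fintype.card_fun, nsmul_eq_mul, mul_one]
    simp
  | more m ih _ =>
    calc ∑ f : Fin (m + 2) → Fin a, epsP f
        = ∑ p : Fin a × (Fin (m + 1) → Fin a), epsP (Fin.consEquiv _ p) :=
          (Equiv.sum_comp (Fin.consEquiv _) epsP).symm
      _ = ∑ x : Fin a, ∑ h : Fin (m + 1) → Fin a, epsP (Fin.cons x h) := by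
          rw [Fintype.sum_prod_type]; rfl
      _ = ∑ x : Fin a, ∑ p : Fin a × (Fin m → Fin a), epsP (Fin.cons x (Fin.consEquiv _ p)) := by
          refine Finset.sum_congr rfl fun x _ => ?_
          exact (Equiv.sum_comp (Fin.consEquiv _) (fun h => epsP (Fin.cons x h))).symm
      _ = ∑ x : Fin a, ∑ y : Fin a, ∑ g : Fin m → Fin a, epsP (Fin.cons x (Fin.cons y g)) := by
          refine Finset.sum_congr rfl fun x _ => ?_
          rw [Fintype.sum_prod_type]; rfl
      _ = ∑ x : Fin a, ∑ g : Fin m → Fin a, ∑ y : Fin a, epsP (Fin.cons x (Fin.cons y g)) :=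
          Finset.sum_congr rfl fun x _ => Finset.sum_comm
      _ = ∑ g : Fin m → Fin a, ∑ x : Fin a, ∑ y : Fin a, epsP (Fin.cons x (Fin.cons y g)) :=
          Finset.sum_comm
      _ = ∑ g : Fin m → Fin a, (a : ℚ) * epsP g := by
          refine Finset.sum_congr rfl fun g _ => ?_
          simp_rw [epsP_cons2]
          have hrw : ∀ x y : Fin a,
              (if y < x then (-1 : ℚ) else 1) *
                ((∏ j, if g j < x then (-1 : ℚ) else 1) *
                  ((∏ j, if g j < y then (-1 : ℚ) else 1) * epsP g)) =
              ((if y < x then (-1 : ℚ) else 1) *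
                ((fun z => ∏ j, if g j < z then (-1 : ℚ) else 1) x *
                 (fun z => ∏ j, if g j < z then (-1 : ℚ) else 1) y)) * epsP g := by
            intro x y; ring
          simp_rw [hrw, ← Finset.sum_mul]
          rw [show (∑ x : Fin a, ∑ y : Fin a,
              (if y < x then (-1 : ℚ) else 1) *
                ((fun z => ∏ j, if g j < z then (-1 : ℚ) else 1) x *
                 (fun z => ∏ j, if g j < z then (-1 : ℚ) else 1) y)) = (a : ℚ) from
            key_double_sum _ ?_]
          · intro z
            rw [← Finset.prod_mul_distrib]
            apply Finset.prod_eq_one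
            intro j _
            split <;> norm_num
      _ = (a : ℚ) ^ ((m + 2 + 1) / 2) := by
          rw [← Finset.mul_sum, ih]
          rw [← pow_succ']
          congr 1
          omega



/-- chain condition -/
def Qc {n a : ℕ} (w : Equiv.Perm (Fin n)) (c : Fin n → Fin a) : Prop :=
  StrictMono (fun i => toLex ((c i, w i) : Fin a × Fin n))

lemma sort_eq_iff_Qc {n a : ℕ} (w : Equiv.Perm (Fin n)) (f : Fin n → Fin a) :
    Tuple.sort f = w ↔ Qc w (f ∘ ⇑w) := by
  rw [eq_comm, Tuple.eq_sort_iff']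
  unfold Qc
  constructor
  · intro h i j hij
    have := h hij
    rw [Subtype.mk_lt_mk] at this
    exact this
  · intro h i j hij
    have := h hij
    rw [Subtype.mk_lt_mk]
    exact this

lemma master {n a : ℕ} (F : (Fin n → Fin a) → ℚ) :
    ∑ f : Fin n → Fin a, F f
      = ∑ w : Equiv.Perm (Fin n),
          ∑ c ∈ Finset.univ.filter (fun c : Fin n → Fin a => Qc w c), F (c ∘ ⇑w⁻¹) := by
  rw [← Finset.sum_fiberwise Finset.univ (fun f => Tuple.sort f) F]
  refine Finset.sum_congr rfl fun w _ => ?_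
  refine Finset.sum_nbij' (i := fun f => f ∘ ⇑w) (j := fun c => c ∘ ⇑w⁻¹) ?_ ?_ ?_ ?_ ?_
  · intro f hf
    simp only [Finset.mem_filter, Finset.mem_univ, true_and] at *
    exact (sort_eq_iff_Qc w f).1 hf
  · intro c hc
    simp only [Finset.mem_filter, Finset.mem_univ, true_and] at *
    rw [sort_eq_iff_Qc w]
    have : (c ∘ ⇑w⁻¹) ∘ ⇑w = c := by
      funext i; simp
    rwa [this]
  · intro f _; funext i; simp
  · intro c _; funext i; simp
  · intro f _
    congr 1
    funext i; simp

lemma epsP_eq_pow {m a : ℕ} (f : Fin m → Fin a) :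
    epsP f = (-1 : ℚ) ^ ((Finset.univ.filter
      (fun p : Fin m × Fin m => p.1 < p.2 ∧ f p.2 < f p.1)).card) := by
  unfold epsP
  rw [Finset.prod_ite, Finset.prod_const, Finset.prod_const, one_pow, mul_one]

lemma Qc.monotone {n a : ℕ} {w : Equiv.Perm (Fin n)} {c : Fin n → Fin a} (h : Qc w c) :
    Monotone c := by
  intro i j hij
  rcases eq_or_lt_of_le hij with rfl | hlt
  · exact le_rfl
  · have := h hlt
    rcases (Prod.Lex.lt_iff).1 this with h1 | h1
    · exact le_of_lt h1
    · exact le_of_eq h1.1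

lemma Qc.lt_of_lt {n a : ℕ} {w : Equiv.Perm (Fin n)} {c : Fin n → Fin a} (h : Qc w c)
    {i j : Fin n} (hij : i < j) (hw : w j < w i) : c i < c j := by
  have := h hij
  rcases (Prod.Lex.lt_iff).1 this with h1 | h1
  · exact h1
  · exact absurd h1.2 (asymm hw)

lemma epsP_comp_inv {n a : ℕ} {w : Equiv.Perm (Fin n)} {c : Fin n → Fin a} (h : Qc w c) :
    epsP (c ∘ ⇑w⁻¹) = (-1 : ℚ) ^ invA w := by
  rw [epsP_eq_pow]
  congr 1
  unfold invA
  refine Finset.card_nbij' (i := fun p => (w⁻¹ p.2, w⁻¹ p.1)) (j := fun q => (w q.2, w q.1))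
    ?_ ?_ ?_ ?_
  · rintro ⟨u, v⟩ hp
    simp only [Finset.mem_coe, Finset.mem_filter, Finset.mem_univ, true_and,
      Function.comp_apply] at *
    obtain ⟨huv, hfv⟩ := hp
    have hww : w (w⁻¹ u) < w (w⁻¹ v) := by simpa using huv
    have hij : w⁻¹ v < w⁻¹ u := by
      by_contra hle
      push_neg at hle
      rcases eq_or_lt_of_le hle with he | hlt
      · rw [he] at hfv; exact lt_irrefl _ hfv
      · have := h.monotone (le_of_lt hlt)
        exact absurd hfv (not_lt.2 this)
    exact ⟨hij, hww⟩
  · rintro ⟨i, j⟩ hq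
    simp only [Finset.mem_coe, Finset.mem_filter, Finset.mem_univ, true_and,
      Function.comp_apply] at *
    obtain ⟨hij, hw⟩ := hq
    refine ⟨hw, ?_⟩
    have : c i < c j := h.lt_of_lt hij hw
    simpa using this
  · rintro ⟨u, v⟩ _; simp
  · rintro ⟨i, j⟩ _; simp



noncomputable def Dlo {n : ℕ} (w : Equiv.Perm (Fin n)) (k : ℕ) : ℕ :=
  ((Finset.range k).filter (fun i =>
    ∃ h : i + 1 < n, w ⟨i + 1, h⟩ < w ⟨i, Nat.lt_of_succ_lt h⟩)).card

lemma desA_eq_Dlo {n : ℕ} (w : Equiv.Perm (Fin n)) : desA w = Dlo w (n - 1) := rfl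

lemma Dlo_le {n : ℕ} (w : Equiv.Perm (Fin n)) (k : ℕ) : Dlo w k ≤ k :=
  le_trans (Finset.card_filter_le _ _) (by simp)

lemma Dlo_mono {n : ℕ} (w : Equiv.Perm (Fin n)) {k l : ℕ} (h : k ≤ l) : Dlo w k ≤ Dlo w l :=
  Finset.card_le_card (Finset.filter_subset_filter _ (by simpa using Finset.range_subset_range.2 h))

lemma Dlo_succ {n : ℕ} (w : Equiv.Perm (Fin n)) (k : ℕ) :
    Dlo w (k + 1) = Dlo w k +
      (if (∃ h : k + 1 < n, w ⟨k + 1, h⟩ < w ⟨k, Nat.lt_of_succ_lt h⟩) then 1 else 0) := by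
  unfold Dlo
  rw [Finset.range_add_one, Finset.filter_insert]
  split
  · rw [Finset.card_insert_of_notMem (by simp)]
  · simp

lemma desA_le {m : ℕ} (w : Equiv.Perm (Fin (m + 1))) : desA w ≤ m := by
  rw [desA_eq_Dlo]
  simpa using Dlo_le w m

lemma Dlo_le_desA {m : ℕ} (w : Equiv.Perm (Fin (m + 1))) {k : ℕ} (h : k ≤ m) :
    Dlo w k ≤ desA w := by
  rw [desA_eq_Dlo]
  simpa using Dlo_mono w h

-- step lemmas
lemma Qc.le_succ {m a : ℕ} {w : Equiv.Perm (Fin (m + 1))} {c : Fin (m + 1) → Fin a}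
    (h : Qc w c) (i : Fin m) : c i.castSucc ≤ c i.succ := by
  have h1 : Monotone c := by
    intro i j hij
    rcases eq_or_lt_of_le hij with rfl | hlt
    · exact le_rfl
    · rcases (Prod.Lex.lt_iff).1 (h hlt) with h1 | h1
      · exact le_of_lt h1
      · exact le_of_eq h1.1
  exact h1 (Fin.castSucc_lt_succ : i.castSucc < i.succ).le

lemma Qc.lt_succ_of_dsc {m a : ℕ} {w : Equiv.Perm (Fin (m + 1))} {c : Fin (m + 1) → Fin a}
    (h : Qc w c) (i : Fin m) (hd : w i.succ < w i.castSucc) : c i.castSucc < c i.succ := by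
  rcases (Prod.Lex.lt_iff).1 (h (Fin.castSucc_lt_succ : i.castSucc < i.succ)) with h1 | h1
  · exact h1
  · exact absurd h1.2 (asymm hd)

lemma dsc_iff {m : ℕ} (w : Equiv.Perm (Fin (m + 1))) (i : Fin m) :
    (∃ h : (i : ℕ) + 1 < m + 1, w ⟨(i : ℕ) + 1, h⟩ < w ⟨(i : ℕ), Nat.lt_of_succ_lt h⟩)
      ↔ w i.succ < w i.castSucc := by
  constructor
  · rintro ⟨h, hlt⟩
    have e1 : (⟨(i : ℕ) + 1, h⟩ : Fin (m + 1)) = i.succ := by ext; simp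
    have e2 : (⟨(i : ℕ), Nat.lt_of_succ_lt h⟩ : Fin (m + 1)) = i.castSucc := by ext; simp
    rwa [e1, e2] at hlt
  · intro hlt
    refine ⟨by omega, ?_⟩
    have e1 : (⟨(i : ℕ) + 1, by omega⟩ : Fin (m + 1)) = i.succ := by ext; simp
    have e2 : ∀ hh, (⟨(i : ℕ), hh⟩ : Fin (m + 1)) = i.castSucc := by intro _; ext; simp
    rw [e1, e2]
    exact hlt

lemma Qc.accum {m a : ℕ} {w : Equiv.Perm (Fin (m + 1))} {c : Fin (m + 1) → Fin a}
    (h : Qc w c) : ∀ (k : ℕ) (i j : Fin (m + 1)), (j : ℕ) = (i : ℕ) + k →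
      (c i : ℕ) + Dlo w (j : ℕ) ≤ (c j : ℕ) + Dlo w (i : ℕ) := by
  intro k
  induction k with
  | zero =>
    intro i j hij
    have : i = j := by ext; omega
    subst this; omega
  | succ k ih =>
    intro i j hij
    have hjm : (i : ℕ) + k < m + 1 := by omega
    have hjm' : (i : ℕ) + k < m := by omega
    set jm : Fin m := ⟨(i : ℕ) + k, hjm'⟩ with hjmdef
    have e1 : jm.castSucc = (⟨(i : ℕ) + k, hjm⟩ : Fin (m + 1)) := by ext; simp [hjmdef]
    have e2 : jm.succ = j := by ext; simp [hjmdef]; omega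
    have ihi := ih i ⟨(i : ℕ) + k, hjm⟩ (by simp)
    simp only [Fin.val_mk] at ihi
    have hle : (c jm.castSucc : ℕ) ≤ (c jm.succ : ℕ) := h.le_succ jm
    by_cases hd : (∃ hh : ((i : ℕ) + k) + 1 < m + 1,
        w ⟨((i : ℕ) + k) + 1, hh⟩ < w ⟨(i : ℕ) + k, Nat.lt_of_succ_lt hh⟩)
    · have hwlt : w jm.succ < w jm.castSucc := by
        rw [← dsc_iff w jm]
        exact hd
      have hstrict := h.lt_succ_of_dsc jm hwlt
      have hD : Dlo w ((i : ℕ) + k + 1) = Dlo w ((i : ℕ) + k) + 1 := by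
        rw [Dlo_succ, if_pos hd]
      rw [e1, e2] at hstrict hle
      simp only [Fin.lt_def, Fin.le_def, Fin.val_mk] at hstrict hle
      have hj' : (j : ℕ) = (i : ℕ) + k + 1 := hij
      rw [hj', hD]
      omega
    · have hD : Dlo w ((i : ℕ) + k + 1) = Dlo w ((i : ℕ) + k) := by
        rw [Dlo_succ, if_neg hd]; ring
      rw [e1, e2] at hle
      have hj' : (j : ℕ) = (i : ℕ) + k + 1 := hij
      rw [hj', hD]
      omega

lemma smono_accum {m M : ℕ} {d : Fin (m + 1) → Fin M} (hd : StrictMono d) :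
    ∀ (k : ℕ) (i j : Fin (m + 1)), (j : ℕ) = (i : ℕ) + k → (d i : ℕ) + k ≤ (d j : ℕ) := by
  intro k
  induction k with
  | zero =>
    intro i j hij
    have : i = j := by ext; omega
    subst this; omega
  | succ k ih =>
    intro i j hij
    have hjm : (i : ℕ) + k < m + 1 := by omega
    have ihi := ih i ⟨(i : ℕ) + k, hjm⟩ (by simp)
    have hlt : d ⟨(i : ℕ) + k, hjm⟩ < d j := hd (by rw [Fin.lt_def]; simp; omega)
    rw [Fin.lt_def] at hlt
    omega

lemma d_ge {m M : ℕ} {d : Fin (m + 1) → Fin M} (hd : StrictMono d) (i : Fin (m + 1)) :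
    (i : ℕ) ≤ (d i : ℕ) := by
  have := smono_accum hd (i : ℕ) ⟨0, by omega⟩ i (by simp)
  omega

/-- number of strictly monotone maps -/
lemma card_strictMono (k M : ℕ) :
    (Finset.univ.filter (fun d : Fin k → Fin M => StrictMono d)).card = M.choose k := by
  conv_rhs => rw [← Finset.card_fin M, ← Finset.card_powersetCard k (Finset.univ : Finset (Fin M))]
  refine Finset.card_bij' (i := fun d hd => Finset.image d Finset.univ)
    (j := fun s hs => fun idx => s.orderEmbOfFin
      (by simpa using (Finset.mem_powersetCard.1 hs).2) idx) ?_ ?_ ?_ ?_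
  · intro d hd
    simp only [Finset.mem_filter, Finset.mem_univ, true_and] at hd
    rw [Finset.mem_powersetCard]
    refine ⟨Finset.subset_univ _, ?_⟩
    rw [Finset.card_image_of_injective _ hd.injective, Finset.card_fin]
  · intro s hs
    simp only [Finset.mem_filter, Finset.mem_univ, true_and]
    exact (s.orderEmbOfFin _).strictMono
  · intro d hd
    simp only [Finset.mem_filter, Finset.mem_univ, true_and] at hd
    refine funext fun idx => ?_
    refine (congrFun (Finset.orderEmbOfFin_unique
      (f := d) (by simpa using (Finset.mem_powersetCard.1 (by
        rw [Finset.mem_powersetCard]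
        exact ⟨Finset.subset_univ _, by
          rw [Finset.card_image_of_injective _ hd.injective, Finset.card_fin]⟩)).2)
      (fun x => Finset.mem_image_of_mem d (Finset.mem_univ x)) hd) idx).symm
  · intro s hs
    have hcard : s.card = k := by simpa using (Finset.mem_powersetCard.1 hs).2
    apply Finset.eq_of_subset_of_card_le
    · intro x hx
      rw [Finset.mem_image] at hx
      obtain ⟨idx, _, rfl⟩ := hx
      exact Finset.orderEmbOfFin_mem s hcard idx
    · refine le_of_eq (Eq.symm ?_)
      exact ((Finset.card_image_of_injective Finset.univ
        (s.orderEmbOfFin hcard).injective).trans (by simpa using hcard.symm))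

lemma desA_m {m : ℕ} (w : Equiv.Perm (Fin (m + 1))) : desA w = Dlo w m := by
  rw [desA_eq_Dlo]
  norm_num

lemma card_Qc {m a : ℕ} (ha : 1 ≤ a) (w : Equiv.Perm (Fin (m + 1))) :
    (Finset.univ.filter (fun c : Fin (m + 1) → Fin a => Qc w c)).card
      = (m + a - desA w).choose (m + 1) := by
  have hdes : desA w = Dlo w m := desA_m w
  have hdesle : desA w ≤ m := by rw [hdes]; exact Dlo_le w m
  rw [← card_strictMono (m + 1) (m + a - desA w)]
  have hQ : ∀ c ∈ Finset.univ.filter (fun c : Fin (m + 1) → Fin a => Qc w c), Qc w c :=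
    fun c hc => (Finset.mem_filter.1 hc).2
  -- bound for forward map
  have keyF : ∀ (c : Fin (m + 1) → Fin a), Qc w c → ∀ i : Fin (m + 1),
      (c i : ℕ) + (i : ℕ) - Dlo w (i : ℕ) < m + a - desA w := by
    intro c hc i
    have hacc := hc.accum (m - (i : ℕ)) i ⟨m, by omega⟩ (by simp; omega)
    simp only [Fin.val_mk] at hacc
    have h1 : (c ⟨m, by omega⟩ : ℕ) < a := (c _).isLt
    have h2 : Dlo w (i : ℕ) ≤ (i : ℕ) := Dlo_le w _
    have h3 : Dlo w (i : ℕ) ≤ desA w := by rw [hdes]; exact Dlo_mono w (by omega)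
    have h4 : (i : ℕ) ≤ m := by omega
    rw [hdes]
    omega
  have keyB : ∀ (d : Fin (m + 1) → Fin (m + a - desA w)), StrictMono d → ∀ i : Fin (m + 1),
      (d i : ℕ) + Dlo w (i : ℕ) - (i : ℕ) < a := by
    intro d hd i
    have hacc := smono_accum hd (m - (i : ℕ)) i ⟨m, by omega⟩ (by simp; omega)
    have h1 : (d ⟨m, by omega⟩ : ℕ) < m + a - desA w := (d _).isLt
    have h3 : Dlo w (i : ℕ) ≤ desA w := by rw [hdes]; exact Dlo_mono w (by omega)
    have h4 : (i : ℕ) ≤ m := by omega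
    omega
  refine Finset.card_bij'
    (i := fun c hc => fun i : Fin (m + 1) =>
      (⟨(c i : ℕ) + (i : ℕ) - Dlo w (i : ℕ),
        keyF c (hQ c hc) i⟩ : Fin (m + a - desA w)))
    (j := fun d hd => fun i : Fin (m + 1) =>
      (⟨(d i : ℕ) + Dlo w (i : ℕ) - (i : ℕ),
        keyB d (Finset.mem_filter.1 hd).2 i⟩ : Fin a)) ?_ ?_ ?_ ?_
  · -- forward map is strictly monotone
    intro c hc
    have hQc := hQ c hc
    simp only [Finset.mem_filter, Finset.mem_univ, true_and]
    rw [Fin.strictMono_iff_lt_succ]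
    intro idx
    simp only [Fin.lt_def, Fin.coe_castSucc, Fin.val_succ, Fin.val_mk]
    have hle : (c idx.castSucc : ℕ) ≤ (c idx.succ : ℕ) := hQc.le_succ idx
    have hcs : (idx.castSucc : ℕ) = (idx : ℕ) := rfl
    have hsc : (idx.succ : ℕ) = (idx : ℕ) + 1 := rfl
    rw [Dlo_succ]
    have h2 : Dlo w (idx : ℕ) ≤ (idx : ℕ) := Dlo_le w _
    by_cases hd : (∃ h : (idx : ℕ) + 1 < m + 1,
        w ⟨(idx : ℕ) + 1, h⟩ < w ⟨(idx : ℕ), Nat.lt_of_succ_lt h⟩)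
    · have hstrict : (c idx.castSucc : ℕ) < (c idx.succ : ℕ) :=
        hQc.lt_succ_of_dsc idx ((dsc_iff w idx).1 hd)
      rw [if_pos hd]
      omega
    · rw [if_neg hd]
      omega
  · -- backward map satisfies Qc
    intro d hd
    have hsm : StrictMono d := (Finset.mem_filter.1 hd).2
    simp only [Finset.mem_filter, Finset.mem_univ, true_and]
    unfold Qc
    rw [Fin.strictMono_iff_lt_succ]
    intro idx
    have hcs : (idx.castSucc : ℕ) = (idx : ℕ) := rfl
    have hsc : (idx.succ : ℕ) = (idx : ℕ) + 1 := rfl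
    have hdlt : (d idx.castSucc : ℕ) < (d idx.succ : ℕ) := hsm (Fin.castSucc_lt_succ : idx.castSucc < idx.succ)
    have hge : (idx : ℕ) ≤ (d idx.castSucc : ℕ) := by
      have := d_ge hsm idx.castSucc; rwa [hcs] at this
    have h2 : Dlo w (idx : ℕ) ≤ (idx : ℕ) := Dlo_le w _
    rw [Prod.Lex.lt_iff]
    simp only [Fin.lt_def, Fin.val_mk, hcs, hsc, ofLex_toLex]
    by_cases hdsc : (∃ h : (idx : ℕ) + 1 < m + 1,
        w ⟨(idx : ℕ) + 1, h⟩ < w ⟨(idx : ℕ), Nat.lt_of_succ_lt h⟩)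
    · left
      rw [Dlo_succ, if_pos hdsc]
      omega
    · have hD : Dlo w ((idx : ℕ) + 1) = Dlo w (idx : ℕ) := by
        rw [Dlo_succ, if_neg hdsc]; omega
      rcases Nat.lt_or_ge ((d idx.castSucc : ℕ) + Dlo w (idx : ℕ) - (idx : ℕ))
          ((d idx.succ : ℕ) + Dlo w (idx : ℕ) - ((idx : ℕ) + 1)) with hlt | hge2
      · left; omega
      · right
        refine ⟨Fin.ext ?_, ?_⟩
        · simp only [Fin.val_mk]; omega
        · have hne : w idx.castSucc ≠ w idx.succ :=
            w.injective.ne (ne_of_lt (Fin.castSucc_lt_succ : idx.castSucc < idx.succ))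
          have hnlt : ¬ (w idx.succ < w idx.castSucc) := by
            intro hcon
            exact hdsc ((dsc_iff w idx).2 hcon)
          exact (lt_of_le_of_ne (le_of_not_gt hnlt) hne : w idx.castSucc < w idx.succ)
  · -- left inverse
    intro c hc
    funext i
    ext
    simp only [Fin.val_mk]
    have h2 : Dlo w (i : ℕ) ≤ (i : ℕ) := Dlo_le w _
    omega
  · -- right inverse
    intro d hd
    have hsm : StrictMono d := (Finset.mem_filter.1 hd).2
    funext i
    ext
    simp only [Fin.val_mk]
    have hge : (i : ℕ) ≤ (d i : ℕ) := d_ge hsm i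
    have h2 : Dlo w (i : ℕ) ≤ (i : ℕ) := Dlo_le w _
    omega

theorem even_perm_binomial_sum (n a : ℕ) (hn : 1 ≤ n) (ha : 1 ≤ a) :
    (∑ w ∈ Finset.univ.filter (fun w : Equiv.Perm (Fin n) => Equiv.Perm.sign w = 1),
        (Nat.choose (n + a - desA w - 1) n : ℚ))
      = ((a : ℚ) ^ n + (a : ℚ) ^ ((n + 1) / 2)) / 2 := by
  obtain ⟨m, rfl⟩ : ∃ m, n = m + 1 := ⟨n - 1, by omega⟩
  have harg : ∀ w : Equiv.Perm (Fin (m + 1)),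
      m + 1 + a - desA w - 1 = m + a - desA w := by
    intro w
    have := desA_le w
    omega
  -- unsigned sum
  have hS1 : ∑ w : Equiv.Perm (Fin (m + 1)),
      (((m + a - desA w).choose (m + 1) : ℕ) : ℚ) = (a : ℚ) ^ (m + 1) := by
    have hm := master (n := m + 1) (a := a) (F := fun _ => (1 : ℚ))
    have hL : ∑ f : Fin (m + 1) → Fin a, (1 : ℚ) = (a : ℚ) ^ (m + 1) := by
      simp [Finset.card_univ]
    calc ∑ w : Equiv.Perm (Fin (m + 1)), (((m + a - desA w).choose (m + 1) : ℕ) : ℚ)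
        = ∑ w : Equiv.Perm (Fin (m + 1)),
            ∑ c ∈ Finset.univ.filter (fun c : Fin (m + 1) → Fin a => Qc w c), (1 : ℚ) := by
          refine Finset.sum_congr rfl fun w _ => ?_
          rw [Finset.sum_const, ← card_Qc ha w]
          simp
      _ = (a : ℚ) ^ (m + 1) := by rw [← hm, hL]
  -- signed sum
  have hS2 : ∑ w : Equiv.Perm (Fin (m + 1)),
      ((Equiv.Perm.sign w : ℤ) : ℚ) * (((m + a - desA w).choose (m + 1) : ℕ) : ℚ)
        = (a : ℚ) ^ ((m + 1 + 1) / 2) := by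
    have hm := master (n := m + 1) (a := a) (F := epsP)
    rw [sum_epsP a (m + 1)] at hm
    calc ∑ w : Equiv.Perm (Fin (m + 1)),
          ((Equiv.Perm.sign w : ℤ) : ℚ) * (((m + a - desA w).choose (m + 1) : ℕ) : ℚ)
        = ∑ w : Equiv.Perm (Fin (m + 1)),
            ∑ c ∈ Finset.univ.filter (fun c : Fin (m + 1) → Fin a => Qc w c),
              epsP (c ∘ ⇑w⁻¹) := by
          refine Finset.sum_congr rfl fun w _ => ?_
          have hin : ∀ c ∈ Finset.univ.filter (fun c : Fin (m + 1) → Fin a => Qc w c),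
              epsP (c ∘ ⇑w⁻¹) = ((Equiv.Perm.sign w : ℤ) : ℚ) := by
            intro c hc
            rw [epsP_comp_inv (Finset.mem_filter.1 hc).2, ← sign_eq_pow_invA]
          rw [Finset.sum_congr rfl hin, Finset.sum_const, card_Qc ha w]
          simp [mul_comm]
      _ = (a : ℚ) ^ ((m + 1 + 1) / 2) := hm.symm
  -- split over even permutations
  rw [Finset.sum_filter]
  have hpt : ∀ w : Equiv.Perm (Fin (m + 1)),
      (if Equiv.Perm.sign w = 1 then ((m + 1 + a - desA w - 1).choose (m + 1) : ℚ) else 0)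
        = (((m + a - desA w).choose (m + 1) : ℕ) : ℚ) * (1 / 2)
          + ((Equiv.Perm.sign w : ℤ) : ℚ)
            * (((m + a - desA w).choose (m + 1) : ℕ) : ℚ) * (1 / 2) := by
    intro w
    rw [harg w]
    rcases Int.units_eq_one_or (Equiv.Perm.sign w) with hs | hs <;> rw [hs] <;> simp <;> ring
  rw [Finset.sum_congr rfl fun w _ => hpt w, Finset.sum_add_distrib,
    ← Finset.sum_mul, ← Finset.sum_mul, hS1, hS2]
  ring
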